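/- For every n ≥ 0, the unit map k → Ω_n is a quasi-isomorphism, where Ω_n = k[t_0,…,t_n, dt_0,…,dt_n]/(t_0+…+t_n−1, dt_0+…+dt_n) is the commutative dg algebra of polynomial differential forms on the n-simplex over a field k of characteristic zero. Equivalently, H^0(Ω_n) = k and H^i(Ω_n) = 0 for i ≠ 0. -/

import Mathlib

open scoped BigOperators

variable (K : Type) [Field K]

/-- The space `Ω_n^m` of polynomial differential `m`-forms on the `n`-simplex,
in the reduced coordinates `t_1, …, t_n` (with `t_0 = 1 - t_1 - ⋯ - t_n`):
a form `∑_S p_S · dt_S` is the function sending an `m`-element subset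
`S = {i_1 < ⋯ < i_m} ⊆ {1,…,n}` to the polynomial coefficient of
`dt_{i_1} ∧ ⋯ ∧ dt_{i_m}`.  This is (a model of) the quotient
`K[t_0,…,t_n,dt_0,…,dt_n]/(t_0+⋯+t_n-1, dt_0+⋯+dt_n)`. -/
def Form (n m : ℕ) : Type :=
  {s : Finset (Fin n) // s.card = m} → MvPolynomial (Fin n) K

noncomputable instance (n m : ℕ) : AddCommGroup (Form K n m) := by unfold Form; infer_instance
noncomputable instance (n m : ℕ) : Module K (Form K n m) := by unfold Form; infer_instance

/-- The de Rham differential `d : Ω_n^m → Ω_n^{m+1}`,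
`d (p · dt_S) = ∑_i (∂p/∂t_i) dt_i ∧ dt_S`. -/
noncomputable def dForm {n m : ℕ} (f : Form K n m) : Form K n (m + 1) := fun s =>
  ∑ i ∈ s.1.attach,
    ((-1 : K) ^ ((s.1.filter (fun j => j < i.1)).card)) •
      MvPolynomial.pderiv i.1
        (f ⟨s.1.erase i.1, by
          rw [Finset.card_erase_of_mem i.2, s.2]; rfl⟩)

/-- The constant form `c ∈ Ω_n^0`. -/
noncomputable def constForm (n : ℕ) (c : K) : Form K n 0 := fun _ => MvPolynomial.C c

/-!
STATEMENT 2: For every `n ≥ 0` and every field `K` of characteristic zero,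
the unit map `K → Ω_n` of the cdga of polynomial differential forms on the
`n`-simplex is a quasi-isomorphism: `H^0(Ω_n) = K` (every closed `0`-form is a
constant, distinct constants being non-cohomologous since they are distinct
closed forms) and `H^m(Ω_n) = 0` for `m ≥ 1` (every closed `m`-form is exact).
-/
open MvPolynomial Finset

/-- Extension of a form to all finsets, by zero. -/
noncomputable def extF {n m : ℕ} (f : Form K n m) (t : Finset (Fin n)) : MvPolynomial (Fin n) K :=
  if h : t.card = m then f ⟨t, h⟩ else 0

/-- The sign `(-1)^{#{j ∈ s : j < i}}`. -/
noncomputable def sgn {n : ℕ} (s : Finset (Fin n)) (i : Fin n) : K :=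
  (-1 : K) ^ ((s.filter (fun j => j < i)).card)

lemma sgn_mul_self {n : ℕ} (s : Finset (Fin n)) (i : Fin n) : sgn K s i * sgn K s i = 1 := by
  rw [sgn, ← mul_pow]; simp

lemma sgn_erase {n : ℕ} (s : Finset (Fin n)) (i : Fin n) : sgn K (s.erase i) i = sgn K s i := by
  unfold sgn
  congr 2
  rw [Finset.filter_erase, Finset.erase_eq_of_notMem]
  simp

lemma sgn_insert {n : ℕ} (s : Finset (Fin n)) (j : Fin n) : sgn K (insert j s) j = sgn K s j := by
  unfold sgn
  congr 2
  rw [Finset.filter_insert, if_neg (lt_irrefl j)]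

lemma sgn_cross {n : ℕ} {s : Finset (Fin n)} {i j : Fin n} (hi : i ∈ s) (hj : j ∉ s) :
    sgn K s j * sgn K (insert j s) i = -(sgn K s i * sgn K (s.erase i) j) := by
  have hij : i ≠ j := fun h => hj (h ▸ hi)
  unfold sgn
  rcases lt_or_gt_of_ne hij with h | h
  · -- i < j
    have h1 : (s.erase i).filter (fun k => k < j) = (s.filter (fun k => k < j)).erase i :=
      Finset.filter_erase _ _ _
    have h2 : i ∈ s.filter (fun k => k < j) := Finset.mem_filter.2 ⟨hi, h⟩
    have h3 : s.filter (fun k => k < j) = insert i ((s.filter (fun k => k < j)).erase i) :=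
      (Finset.insert_erase h2).symm
    have hc : #(s.filter (fun k => k < j)) = #((s.erase i).filter (fun k => k < j)) + 1 := by
      rw [h1, h3, Finset.card_insert_of_notMem (Finset.notMem_erase _ _)]
      rw [← h3]
    have h4 : ((insert j s).filter (fun k => k < i)) = s.filter (fun k => k < i) := by
      rw [Finset.filter_insert, if_neg (by exact fun hh => absurd h (not_lt.2 hh.le))]
    rw [hc, h4]
    ring
  · -- j < i
    have h1 : (s.erase i).filter (fun k => k < j) = s.filter (fun k => k < j) := by
      rw [Finset.filter_erase, Finset.erase_eq_of_notMem]
      simp only [Finset.mem_filter, not_and]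
      exact fun _ => not_lt.2 h.le
    have h4 : ((insert j s).filter (fun k => k < i)) = insert j (s.filter (fun k => k < i)) := by
      rw [Finset.filter_insert, if_pos h]
    have h5 : j ∉ s.filter (fun k => k < i) := fun hh => hj (Finset.mem_filter.1 hh).1
    rw [h1, h4, Finset.card_insert_of_notMem h5]
    ring

/-- Contraction with the Euler vector field (homotopy operator). -/
noncomputable def hForm {n m : ℕ} (f : Form K n (m + 1)) : Form K n m := fun s =>
  ∑ j ∈ s.1ᶜ, sgn K s.1 j • (X j * extF K f (insert j s.1))

lemma dForm_apply {n m : ℕ} (f : Form K n m) (S : Finset (Fin n)) (hS : S.card = m + 1) :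
    dForm K f ⟨S, hS⟩ = ∑ i ∈ S, sgn K S i • pderiv i (extF K f (S.erase i)) := by
  rw [← Finset.sum_attach S (fun i => sgn K S i • pderiv i (extF K f (S.erase i)))]
  unfold dForm sgn extF
  apply Finset.sum_congr rfl
  intro i _
  rw [dif_pos]

lemma cartan {n m : ℕ} (ω : Form K n (m + 1)) (s : {s : Finset (Fin n) // s.card = m + 1}) :
    dForm K (hForm K ω) s + hForm K (dForm K ω) s
      = (m + 1) • ω s + ∑ i, X i * pderiv i (ω s) := by
  obtain ⟨S, hS⟩ := s
  have hiS : ∀ i ∈ S, i ∉ Sᶜ := fun i hi => by simp [hi]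
  have hjS : ∀ j ∈ Sᶜ, j ∉ S := fun j hj => by simpa using hj
  have heS : extF K ω S = ω ⟨S, hS⟩ := by unfold extF; exact dif_pos hS
  have hA : dForm K (hForm K ω) ⟨S, hS⟩
      = ∑ i ∈ S, (ω ⟨S, hS⟩ + X i * pderiv i (ω ⟨S, hS⟩))
        + ∑ i ∈ S, ∑ j ∈ Sᶜ, (sgn K S i * sgn K (S.erase i) j) •
            (X j * pderiv i (extF K ω (insert j (S.erase i)))) := by
    rw [dForm_apply, ← Finset.sum_add_distrib]
    refine Finset.sum_congr rfl fun i hi => ?_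
    have hc : (S.erase i).card = m := by rw [Finset.card_erase_of_mem hi, hS]; rfl
    have h1 : extF K (hForm K ω) (S.erase i)
        = ∑ j ∈ insert i Sᶜ, sgn K (S.erase i) j • (X j * extF K ω (insert j (S.erase i))) := by
      unfold extF hForm
      rw [dif_pos hc, Finset.compl_erase]
      rfl
    rw [h1, map_sum, Finset.smul_sum]
    simp only [Derivation.map_smul, smul_smul]
    rw [Finset.sum_insert (hiS i hi)]
    congr 1
    · rw [Finset.insert_erase hi, sgn_erase, sgn_mul_self K, one_smul, heS,
        pderiv_mul, pderiv_X_self, one_mul]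
    · refine Finset.sum_congr rfl fun j hj => ?_
      have hji : j ≠ i := fun h => hiS i hi (h ▸ hj)
      rw [pderiv_mul, pderiv_X_of_ne hji, zero_mul, zero_add]
  have hB : hForm K (dForm K ω) ⟨S, hS⟩
      = ∑ j ∈ Sᶜ, (X j * pderiv j (ω ⟨S, hS⟩))
        + ∑ j ∈ Sᶜ, ∑ i ∈ S, (sgn K S j * sgn K (insert j S) i) •
            (X j * pderiv i (extF K ω ((insert j S).erase i))) := by
    unfold hForm
    rw [← Finset.sum_add_distrib]
    refine Finset.sum_congr rfl fun j hj => ?_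
    have hc : (insert j S).card = m + 1 + 1 := by
      rw [Finset.card_insert_of_notMem (hjS j hj), hS]
    have h1 : extF K (dForm K ω) (insert j S) = dForm K ω ⟨insert j S, hc⟩ := by
      unfold extF; exact dif_pos hc
    rw [h1, dForm_apply K ω (insert j S) hc]
    rw [Finset.mul_sum, Finset.smul_sum]
    simp only [mul_smul_comm, smul_smul]
    rw [Finset.sum_insert (hjS j hj)]
    congr 1
    · rw [Finset.erase_insert (hjS j hj), sgn_insert, sgn_mul_self K, one_smul, heS]
  rw [hA, hB]
  have hcross : ∑ i ∈ S, ∑ j ∈ Sᶜ, (sgn K S i * sgn K (S.erase i) j) •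
            (X j * pderiv i (extF K ω (insert j (S.erase i))))
      + ∑ j ∈ Sᶜ, ∑ i ∈ S, (sgn K S j * sgn K (insert j S) i) •
            (X j * pderiv i (extF K ω ((insert j S).erase i))) = 0 := by
    rw [Finset.sum_comm (s := Sᶜ) (t := S), ← Finset.sum_add_distrib]
    refine Finset.sum_eq_zero fun i hi => ?_
    rw [← Finset.sum_add_distrib]
    refine Finset.sum_eq_zero fun j hj => ?_
    have hji : j ≠ i := fun h => hiS i hi (h ▸ hj)
    rw [Finset.erase_insert_of_ne hji]
    rw [sgn_cross K hi (hjS j hj), neg_smul, add_neg_cancel]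
  -- combine
  have : ∑ i ∈ S, (ω ⟨S, hS⟩ + X i * pderiv i (ω ⟨S, hS⟩)) + ∑ j ∈ Sᶜ, (X j * pderiv j (ω ⟨S, hS⟩))
      = (m + 1) • ω ⟨S, hS⟩ + ∑ i, X i * pderiv i (ω ⟨S, hS⟩) := by
    rw [Finset.sum_add_distrib, Finset.sum_const, hS]
    rw [add_assoc, add_comm (∑ i ∈ S, X i * pderiv i (ω ⟨S, hS⟩)), Finset.sum_compl_add_sum]
  rw [add_add_add_comm, hcross, add_zero, this]

/-- Scale each monomial of total degree `d` by `1/(d+m)`. -/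
noncomputable def Jp {n : ℕ} (m : ℕ) (p : MvPolynomial (Fin n) K) : MvPolynomial (Fin n) K :=
  ∑ d ∈ p.support, monomial d ((((∑ i, d i) + m : ℕ) : K)⁻¹ * coeff d p)

lemma coeff_Jp {n : ℕ} (m : ℕ) (p : MvPolynomial (Fin n) K) (d : Fin n →₀ ℕ) :
    coeff d (Jp K m p) = (((∑ i, d i) + m : ℕ) : K)⁻¹ * coeff d p := by
  unfold Jp
  rw [MvPolynomial.coeff_sum]
  simp only [coeff_monomial]
  rw [Finset.sum_ite_eq' p.support d (fun e => (((∑ i, e i) + m : ℕ) : K)⁻¹ * coeff e p)]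
  by_cases hd : d ∈ p.support
  · rw [if_pos hd]
  · rw [if_neg hd, MvPolynomial.notMem_support_iff.1 hd, mul_zero]

lemma Jp_add {n : ℕ} (m : ℕ) (p q : MvPolynomial (Fin n) K) :
    Jp K m (p + q) = Jp K m p + Jp K m q := by
  apply MvPolynomial.ext; intro d
  simp [coeff_Jp, mul_add]

lemma Jp_smul {n : ℕ} (m : ℕ) (c : K) (p : MvPolynomial (Fin n) K) :
    Jp K m (c • p) = c • Jp K m p := by
  apply MvPolynomial.ext; intro d
  simp only [coeff_Jp, MvPolynomial.coeff_smul, smul_eq_mul]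
  ring

lemma Jp_zero {n : ℕ} (m : ℕ) : Jp K m (0 : MvPolynomial (Fin n) K) = 0 := by
  apply MvPolynomial.ext; intro d
  simp [coeff_Jp]

lemma Jp_sum {n : ℕ} (m : ℕ) {α : Type} (t : Finset α) (f : α → MvPolynomial (Fin n) K) :
    Jp K m (∑ x ∈ t, f x) = ∑ x ∈ t, Jp K m (f x) := by
  classical
  induction t using Finset.induction with
  | empty => simp [Jp_zero]
  | insert _ _ h ih => rw [Finset.sum_insert h, Finset.sum_insert h, Jp_add, ih]

lemma Jp_monomial {n : ℕ} (m : ℕ) (d : Fin n →₀ ℕ) (a : K) :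
    Jp K m (monomial d a) = monomial d ((((∑ i, d i) + m : ℕ) : K)⁻¹ * a) := by
  apply MvPolynomial.ext; intro e
  rw [coeff_Jp, coeff_monomial, coeff_monomial]
  split_ifs with h
  · subst h; rfl
  · rw [mul_zero]

lemma sum_sub_single {n : ℕ} (d : Fin n →₀ ℕ) (i : Fin n) (hdi : d i ≠ 0) :
    (∑ j, (d - Finsupp.single i 1 : Fin n →₀ ℕ) j) + 1 = ∑ j, d j := by
  have h1 : (d - Finsupp.single i 1 : Fin n →₀ ℕ) i = d i - 1 := by
    rw [Finsupp.tsub_apply, Finsupp.single_eq_same]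
  have h2 : ∀ j ∈ Finset.univ.erase i, (d - Finsupp.single i 1 : Fin n →₀ ℕ) j = d j := by
    intro j hj
    rw [Finsupp.tsub_apply, Finsupp.single_eq_of_ne (Finset.ne_of_mem_erase hj), tsub_zero]
  have h2' : ∑ x ∈ Finset.univ.erase i, (d - Finsupp.single i 1 : Fin n →₀ ℕ) x
      = ∑ x ∈ Finset.univ.erase i, d x := Finset.sum_congr rfl h2
  rw [← Finset.add_sum_erase _ _ (Finset.mem_univ i), ← Finset.add_sum_erase _ d (Finset.mem_univ i),
    h1, h2']
  omega

lemma pderiv_Jp {n : ℕ} (m : ℕ) (i : Fin n) (p : MvPolynomial (Fin n) K) :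
    pderiv i (Jp K m p) = Jp K (m + 1) (pderiv i p) := by
  induction p using MvPolynomial.induction_on' with
  | add p q hp hq => rw [Jp_add, map_add, map_add, Jp_add, hp, hq]
  | monomial d a =>
    rw [Jp_monomial, pderiv_monomial, pderiv_monomial, Jp_monomial]
    by_cases hdi : d i = 0
    · rw [hdi]; norm_num
    · have hc : (∑ j, (d - Finsupp.single i 1 : Fin n →₀ ℕ) j) + (m + 1) = (∑ j, d j) + m := by
        have := sum_sub_single d i hdi
        omega
      congr 1
      rw [hc]
      push_cast
      ring

lemma euler_monomial {n : ℕ} (d : Fin n →₀ ℕ) (a : K) :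
    ∑ i, X i * pderiv i (monomial d a) = (∑ i, d i) • monomial d a := by
  rw [Finset.sum_smul]
  refine Finset.sum_congr rfl fun i _ => ?_
  rw [pderiv_monomial]
  by_cases hdi : d i = 0
  · rw [hdi]; norm_num
  · rw [X, monomial_mul, one_mul]
    have h1 : Finsupp.single i 1 + (d - Finsupp.single i 1) = d := by
      rw [add_comm]
      exact tsub_add_cancel_of_le (Finsupp.single_le_iff.mpr (Nat.one_le_iff_ne_zero.mpr hdi))
    rw [h1, MvPolynomial.smul_monomial]
    congr 1
    rw [nsmul_eq_mul, mul_comm]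

lemma LJ [CharZero K] {n : ℕ} (m : ℕ) (p : MvPolynomial (Fin n) K) :
    (m + 1) • Jp K (m + 1) p + ∑ i, X i * pderiv i (Jp K (m + 1) p) = p := by
  induction p using MvPolynomial.induction_on' with
  | add p q hp hq =>
    simp only [Jp_add, smul_add, map_add, mul_add, Finset.sum_add_distrib]
    rw [add_add_add_comm, hp, hq]
  | monomial d a =>
    rw [Jp_monomial, euler_monomial, ← add_nsmul, ← Nat.cast_smul_eq_nsmul K,
      MvPolynomial.smul_monomial]
    have hc : (((∑ i, d i) + (m + 1) : ℕ) : K) ≠ 0 := by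
      rw [Nat.cast_ne_zero]; omega
    congr 1
    rw [smul_eq_mul, ← mul_assoc]
    have h2 : ((m + 1 + ∑ i, d i : ℕ) : K) = (((∑ i, d i) + (m + 1) : ℕ) : K) := by
      push_cast; ring
    rw [h2, mul_inv_cancel₀ hc, one_mul]

lemma coeff_pderiv {n : ℕ} (i : Fin n) (p : MvPolynomial (Fin n) K) (d : Fin n →₀ ℕ) :
    coeff d (pderiv i p) = (d i + 1) • coeff (d + Finsupp.single i 1) p := by
  induction p using MvPolynomial.induction_on' with
  | add p q hp hq => rw [map_add, coeff_add, coeff_add, hp, hq, smul_add]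
  | monomial e a =>
    rw [pderiv_monomial, coeff_monomial, coeff_monomial]
    split_ifs with h1 h2 h2
    · -- e - single = d and e = d + single
      subst h2
      have : (d + Finsupp.single i 1 : Fin n →₀ ℕ) i = d i + 1 := by
        rw [Finsupp.add_apply, Finsupp.single_eq_same]
      rw [this, nsmul_eq_mul]
      push_cast
      ring
    · -- e - single = d, e ≠ d + single ⇒ e i = 0
      have hei : e i = 0 := by
        by_contra hne
        have h3 : e - Finsupp.single i 1 + Finsupp.single i 1 = e :=
          tsub_add_cancel_of_le (Finsupp.single_le_iff.mpr (Nat.one_le_iff_ne_zero.mpr hne))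
        rw [h1] at h3
        exact h2 h3.symm
      rw [hei]
      norm_num
    · -- e ≠ d + single impossible given e = d + single? other direction
      subst h2
      exact absurd (add_tsub_cancel_right d (Finsupp.single i 1)) h1
    · rw [smul_zero]

lemma eq_C_of_pderiv_eq_zero [CharZero K] {n : ℕ} (p : MvPolynomial (Fin n) K)
    (hp : ∀ i, pderiv i p = 0) : p = C (coeff 0 p) := by
  apply MvPolynomial.ext; intro d
  rw [coeff_C]
  by_cases hd : 0 = d
  · rw [if_pos hd, ← hd]
  · rw [if_neg hd]
    obtain ⟨i, hi⟩ : ∃ i, d i ≠ 0 := by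
      by_contra h
      push_neg at h
      exact hd (Finsupp.ext fun j => by simpa using h j).symm
    have hle : d - Finsupp.single i 1 + Finsupp.single i 1 = d :=
      tsub_add_cancel_of_le (Finsupp.single_le_iff.mpr (Nat.one_le_iff_ne_zero.mpr hi))
    have h0 : coeff (d - Finsupp.single i 1) (pderiv i p) = 0 := by rw [hp i, coeff_zero]
    rw [coeff_pderiv, hle] at h0
    have hne : (((d - Finsupp.single i 1 : Fin n →₀ ℕ) i + 1 : ℕ) : K) ≠ 0 := by
      rw [Nat.cast_ne_zero]; omega
    rw [nsmul_eq_mul] at h0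
    exact (mul_eq_zero.1 h0).resolve_left hne

lemma extF_J {n m : ℕ} (ω : Form K n m) (t : Finset (Fin n)) :
    extF K (fun s => Jp K m (ω s) : Form K n m) t = Jp K m (extF K ω t) := by
  unfold extF
  split_ifs with h
  · rfl
  · rw [Jp_zero]

lemma dForm_J {n m : ℕ} (ω : Form K n (m + 1)) (S : Finset (Fin n)) (hS : S.card = m + 1 + 1) :
    dForm K (fun s => Jp K (m + 1) (ω s) : Form K n (m + 1)) ⟨S, hS⟩
      = Jp K (m + 2) (dForm K ω ⟨S, hS⟩) := by
  rw [dForm_apply K ω S hS, dForm_apply K (fun s => Jp K (m + 1) (ω s) : Form K n (m + 1)) S hS, Jp_sum]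
  refine Finset.sum_congr rfl fun i hi => ?_
  rw [extF_J, pderiv_Jp, ← Jp_smul]

theorem unit_to_polynomial_forms_quasiIso [CharZero K] (n : ℕ) :
    -- the unit map is injective and closed
    (Function.Injective fun c : K => constForm K n c) ∧
    (∀ c : K, dForm K (constForm K n c) = 0) ∧
    -- `H^0(Ω_n) = K`: closed `0`-forms are exactly the constants
    (∀ f : Form K n 0, dForm K f = 0 → ∃ c : K, f = constForm K n c) ∧
    -- `H^m(Ω_n) = 0` for `m ≠ 0`: closed positive-degree forms are exact
    (∀ (m : ℕ) (ω : Form K n (m + 1)), dForm K ω = 0 →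
      ∃ η : Form K n m, dForm K η = ω) := by
  refine ⟨?_, ?_, ?_, ?_⟩
  · intro a b hab
    have h1 : constForm K n a ⟨∅, Finset.card_empty⟩ = constForm K n b ⟨∅, Finset.card_empty⟩ :=
      congrFun hab ⟨∅, Finset.card_empty⟩
    exact MvPolynomial.C_injective (Fin n) K h1
  · intro c
    funext s
    obtain ⟨S, hS⟩ := s
    have h1 : dForm K (constForm K n c) ⟨S, hS⟩ = 0 := by
      rw [dForm_apply]
      refine Finset.sum_eq_zero fun i hi => ?_
      unfold extF constForm
      split_ifs
      · rw [pderiv_C, smul_zero]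
      · rw [map_zero, smul_zero]
    exact h1
  · intro f hf
    set p := f ⟨∅, Finset.card_empty⟩ with hp0
    have hp : ∀ i, pderiv i p = 0 := by
      intro i
      have h1 : ({i} : Finset (Fin n)).card = 0 + 1 := Finset.card_singleton i
      have h2 : dForm K f ⟨{i}, h1⟩ = 0 := congrFun hf ⟨{i}, h1⟩
      rw [dForm_apply, Finset.sum_singleton] at h2
      have h3 : sgn K {i} i = 1 := by
        unfold sgn
        rw [Finset.filter_singleton, if_neg (lt_irrefl i), Finset.card_empty, pow_zero]
      have h4 : extF K f (({i} : Finset (Fin n)).erase i) = p := by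
        rw [Finset.erase_singleton]
        unfold extF
        rw [dif_pos Finset.card_empty]
      rw [h3, h4, one_smul] at h2
      exact h2
    refine ⟨coeff 0 p, ?_⟩
    funext s
    obtain ⟨S, hS⟩ := s
    have hSe : S = ∅ := Finset.card_eq_zero.1 hS
    subst hSe
    show f ⟨∅, hS⟩ = C (coeff 0 p)
    have : f ⟨∅, hS⟩ = p := rfl
    rw [this]
    exact eq_C_of_pderiv_eq_zero K p hp
  · intro m ω hω
    refine ⟨hForm K (fun s => Jp K (m + 1) (ω s) : Form K n (m + 1)), ?_⟩
    funext s
    obtain ⟨S, hS⟩ := s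
    have hψ : dForm K (fun s => Jp K (m + 1) (ω s) : Form K n (m + 1)) = 0 := by
      funext u
      obtain ⟨U, hU⟩ := u
      have h0 : dForm K ω ⟨U, hU⟩ = 0 := congrFun hω ⟨U, hU⟩
      show dForm K (fun s => Jp K (m + 1) (ω s) : Form K n (m + 1)) ⟨U, hU⟩ = 0
      rw [dForm_J, h0, Jp_zero]
    have hc := cartan K (fun s => Jp K (m + 1) (ω s) : Form K n (m + 1)) ⟨S, hS⟩
    rw [hψ] at hc
    have h2 : hForm K (0 : Form K n (m + 1 + 1)) ⟨S, hS⟩ = 0 := by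
      unfold hForm
      refine Finset.sum_eq_zero fun j hj => ?_
      unfold extF
      split_ifs with h
      · show sgn K S j • (X j * (0 : Form K n (m + 1 + 1)) ⟨insert j S, h⟩) = 0
        have : (0 : Form K n (m + 1 + 1)) ⟨insert j S, h⟩ = 0 := rfl
        rw [this, mul_zero, smul_zero]
      · rw [mul_zero, smul_zero]
    rw [h2, add_zero] at hc
    show dForm K (hForm K (fun s => Jp K (m + 1) (ω s) : Form K n (m + 1))) ⟨S, hS⟩ = ω ⟨S, hS⟩
    rw [hc]
    exact LJ K m (ω ⟨S, hS⟩)
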